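/- Let c₁ > 0, c₂ > 0, and let τ : [a,b] → ℝ be a C¹ function such that |τ'(η)|/√(c₁²τ(η)² + c₂²) ≤ M for all η ∈ [a,b], for some constant M > 0. Then |arcsinh(c₁τ(b)/c₂) - arcsinh(c₁τ(a)/c₂)| ≤ c₁ M (b - a), and consequently |τ(b)| ≤ (c₂/c₁)·sinh(arcsinh(c₁|τ(a)|/c₂) + c₁ M (b-a)). -/

import Mathlib

theorem stmt_8 (c₁ c₂ M a b : ℝ) (hc₁ : 0 < c₁) (hc₂ : 0 < c₂) (hM : 0 < M)
    (hab : a ≤ b) (τ τ' : ℝ → ℝ)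
    (hderiv : ∀ η ∈ Set.Icc a b, HasDerivAt τ (τ' η) η)
    (hcont : ContinuousOn τ' (Set.Icc a b))
    (hbound : ∀ η ∈ Set.Icc a b, |τ' η| / Real.sqrt (c₁ ^ 2 * (τ η) ^ 2 + c₂ ^ 2) ≤ M) :
    |Real.arsinh (c₁ * τ b / c₂) - Real.arsinh (c₁ * τ a / c₂)| ≤ c₁ * M * (b - a) ∧
      |τ b| ≤ (c₂ / c₁) * Real.sinh (Real.arsinh (c₁ * |τ a| / c₂) + c₁ * M * (b - a)) := by
  set g : ℝ → ℝ := fun η => Real.arsinh (c₁ * τ η / c₂) with hg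
  have hgderiv : ∀ η ∈ Set.Icc a b,
      HasDerivWithinAt g ((Real.sqrt (1 + (c₁ * τ η / c₂) ^ 2))⁻¹ * (c₁ * τ' η / c₂)) (Set.Icc a b) η := by
    intro η hη
    have h1 : HasDerivAt (fun η => c₁ * τ η / c₂) (c₁ * τ' η / c₂) η := by
      simpa [mul_div_assoc] using ((hderiv η hη).const_mul c₁).div_const c₂
    exact ((Real.hasDerivAt_arsinh _).comp η h1).hasDerivWithinAt
  have hsqrt : ∀ η : ℝ, Real.sqrt (c₁ ^ 2 * (τ η) ^ 2 + c₂ ^ 2)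
      = c₂ * Real.sqrt (1 + (c₁ * τ η / c₂) ^ 2) := by
    intro η
    rw [← Real.sqrt_sq hc₂.le, ← Real.sqrt_mul (by positivity)]
    congr 1
    field_simp
    rw [Real.sqrt_sq hc₂.le]
    ring
  have hDbound : ∀ η ∈ Set.Icc a b,
      ‖(Real.sqrt (1 + (c₁ * τ η / c₂) ^ 2))⁻¹ * (c₁ * τ' η / c₂)‖ ≤ c₁ * M := by
    intro η hη
    have hs : 0 < Real.sqrt (1 + (c₁ * τ η / c₂) ^ 2) := Real.sqrt_pos.2 (by positivity)
    have hb := hbound η hη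
    rw [Real.norm_eq_abs, abs_mul, abs_inv, abs_div, abs_mul,
      abs_of_pos hs, abs_of_pos hc₁, abs_of_pos hc₂]
    rw [div_le_iff₀ (by rw [hsqrt η]; positivity)] at hb
    rw [hsqrt η] at hb
    rw [inv_mul_le_iff₀ hs, div_le_iff₀ hc₂]
    nlinarith [hs.le, hc₁.le, hM.le]
  have hmvt : ‖g b - g a‖ ≤ c₁ * M * ‖b - a‖ := by
    refine (convex_Icc a b).norm_image_sub_le_of_norm_hasDerivWithin_le hgderiv hDbound
      (Set.left_mem_Icc.2 hab) (Set.right_mem_Icc.2 hab)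
  have h1 : |g b - g a| ≤ c₁ * M * (b - a) := by
    rwa [Real.norm_eq_abs, Real.norm_eq_abs, abs_of_nonneg (sub_nonneg.2 hab)] at hmvt
  refine ⟨h1, ?_⟩
  have hga : |g a| = Real.arsinh (c₁ * |τ a| / c₂) := by
    rcases abs_cases (τ a) with ⟨h, _⟩ | ⟨h, _⟩
    · rw [h]
      exact abs_of_nonneg (Real.arsinh_nonneg_iff.2 (by positivity))
    · rw [h]
      rw [abs_of_nonpos (Real.arsinh_nonpos_iff.2
        (div_nonpos_of_nonpos_of_nonneg (by nlinarith [abs_nonneg (τ a), h]) hc₂.le))]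
      rw [show c₁ * -τ a / c₂ = -(c₁ * τ a / c₂) by ring, Real.arsinh_neg]
  have hgb : |g b| ≤ Real.arsinh (c₁ * |τ a| / c₂) + c₁ * M * (b - a) := by
    calc |g b| ≤ |g a| + |g b - g a| := by
          have := abs_sub_abs_le_abs_sub (g b) (g a); linarith [abs_sub_comm (g b) (g a)]
      _ ≤ Real.arsinh (c₁ * |τ a| / c₂) + c₁ * M * (b - a) := by rw [hga]; linarith
  have : |τ b| = (c₂ / c₁) * Real.sinh |g b| := by
    rw [← Real.abs_sinh, hg]
    simp only [Real.sinh_arsinh]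
    rw [abs_div, abs_mul, abs_of_pos hc₁, abs_of_pos hc₂]
    field_simp
  rw [this]
  have := Real.sinh_le_sinh.2 hgb
  have hpos : 0 < c₂ / c₁ := by positivity
  nlinarith
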